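/- For 0 < q < 1 and integers 0 ≤ k ≤ ⌊n/2⌋, one has |(q;q)_∞/(q;q)_{n-k} - 1| ≤ (-q³;q)_∞ q^{n/2} / (1-q), where (-q³;q)_∞ = ∏_{j=0}^∞ (1 + q^{j+3}). -/

import Mathlib

set_option maxHeartbeats 1000000

open Real Finset

/-- The q-Pochhammer symbol `(q;q)_m = ∏_{j=1}^m (1 - q^j)`. -/
noncomputable def qPoch (q : ℝ) (m : ℕ) : ℝ := ∏ j ∈ Finset.range m, (1 - q ^ (j + 1))

/-- `(q;q)_∞ = ∏_{j=1}^∞ (1 - q^j)`. -/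
noncomputable def qPochInf (q : ℝ) : ℝ := ∏' j : ℕ, (1 - q ^ (j + 1))

lemma aux_pow_lt_one {q : ℝ} (hq0 : 0 < q) (hq1 : q < 1) (j : ℕ) : q ^ (j + 1) < 1 :=
  pow_lt_one₀ hq0.le hq1 (Nat.succ_ne_zero j)

lemma aux_summable_log {q : ℝ} (hq0 : 0 < q) (hq1 : q < 1) :
    Summable fun j : ℕ => Real.log (1 - q ^ (j + 1)) := by
  have hb : Summable fun j : ℕ => q ^ (j + 1) / (1 - q) :=
    (((summable_geometric_of_lt_one hq0.le hq1).mul_left q).div_const (1 - q)).congr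
      (by intro j; rw [pow_succ]; ring)
  apply Summable.of_norm
  apply hb.of_nonneg_of_le (fun j => norm_nonneg _)
  intro j
  have h1 : (0:ℝ) < 1 - q ^ (j + 1) := by linarith [aux_pow_lt_one hq0 hq1 j]
  have hlog : Real.log (1 - q ^ (j + 1)) ≤ 0 :=
    Real.log_nonpos h1.le (by nlinarith [pow_pos hq0 (j+1)])
  rw [Real.norm_eq_abs, abs_of_nonpos hlog]
  have : -Real.log (1 - q ^ (j + 1)) = Real.log (1 - q ^ (j + 1))⁻¹ := by
    rw [Real.log_inv]
  rw [this]
  have h2 := Real.log_le_sub_one_of_pos (inv_pos.2 h1)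
  have h3 : (1 - q ^ (j + 1))⁻¹ - 1 = q ^ (j + 1) / (1 - q ^ (j + 1)) := by
    field_simp
    ring
  have h4 : q ^ (j + 1) / (1 - q ^ (j + 1)) ≤ q ^ (j + 1) / (1 - q) := by
    apply div_le_div_of_nonneg_left (pow_pos hq0 _).le (by linarith) _
    have : q ^ (j + 1) ≤ q := by
      calc q ^ (j + 1) ≤ q ^ 1 := pow_le_pow_of_le_one hq0.le hq1.le (by omega)
      _ = q := pow_one q
    linarith
  linarith

lemma aux_multipliable_shift {q : ℝ} (hq0 : 0 < q) (hq1 : q < 1) (m : ℕ) :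
    Multipliable fun j : ℕ => (1 - q ^ (j + m + 1)) := by
  exact Real.multipliable_of_summable_log
    (fun j => sub_pos.2 (aux_pow_lt_one hq0 hq1 (j + m)))
    ((summable_nat_add_iff m).mpr (aux_summable_log hq0 hq1))

lemma aux_prod_one_sub_ge {a : ℕ → ℝ} (h0 : ∀ j, 0 ≤ a j) (h1 : ∀ j, a j ≤ 1) (N : ℕ) :
    1 - ∑ j ∈ range N, a j ≤ ∏ j ∈ range N, (1 - a j) := by
  induction N with
  | zero => simp
  | succ N ih =>
    rw [Finset.prod_range_succ, Finset.sum_range_succ]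
    have hP0 : (0:ℝ) ≤ ∏ j ∈ range N, (1 - a j) :=
      Finset.prod_nonneg fun j _ => by linarith [h1 j]
    have hP1 : (∏ j ∈ range N, (1 - a j)) ≤ 1 :=
      Finset.prod_le_one (fun j _ => by linarith [h1 j]) (fun j _ => by linarith [h0 j])
    nlinarith [h0 N, h1 N]

theorem stmt_8 (q : ℝ) (hq0 : 0 < q) (hq1 : q < 1) (n k : ℕ) (hk : k ≤ n / 2) :
    |qPochInf q / qPoch q (n - k) - 1| ≤
      (∏' j : ℕ, (1 + q ^ (j + 3))) * q ^ ((n : ℝ) / 2) / (1 - q) := by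
  set m := n - k with hm
  have hq1' : (0:ℝ) < 1 - q := by linarith
  -- the tail product
  set T : ℝ := ∏' i : ℕ, (1 - q ^ (i + m + 1)) with hT
  have hmulT : Multipliable fun i : ℕ => (1 - q ^ (i + m + 1)) :=
    aux_multipliable_shift hq0 hq1 m
  have hsplit : qPoch q m * T = qPochInf q := by
    have := Multipliable.prod_mul_tprod_nat_mul' (f := fun j : ℕ => (1 - q ^ (j + 1))) (k := m) hmulT
    simpa [qPoch, qPochInf, hT] using this
  have hPochpos : 0 < qPoch q m :=
    Finset.prod_pos fun j _ => by linarith [aux_pow_lt_one hq0 hq1 j]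
  have hratio : qPochInf q / qPoch q m = T := by
    rw [← hsplit, mul_comm, mul_div_assoc, div_self hPochpos.ne', mul_one]
  -- bounds on T
  have htendsto := hmulT.hasProd.tendsto_prod_nat
  have hTle : T ≤ 1 := by
    apply le_of_tendsto htendsto
    filter_upwards with N
    exact Finset.prod_le_one (fun j _ => by linarith [aux_pow_lt_one hq0 hq1 (j + m)])
      (fun j _ => by nlinarith [pow_pos hq0 (j + m + 1)])
  have hSsum : ∀ N : ℕ, ∑ j ∈ range N, q ^ (j + m + 1) ≤ q ^ (m + 1) / (1 - q) := by
    intro N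
    have : ∀ j ∈ range N, q ^ (j + m + 1) = q ^ (m + 1) * q ^ j := fun j _ => by ring
    rw [Finset.sum_congr rfl this, ← Finset.mul_sum]
    rw [div_eq_mul_inv]
    apply mul_le_mul_of_nonneg_left _ (pow_pos hq0 _).le
    have := Summable.sum_le_tsum (range N) (fun j _ => (pow_pos hq0 j).le)
      (summable_geometric_of_lt_one hq0.le hq1)
    rwa [tsum_geometric_of_lt_one hq0.le hq1] at this
  have hTge : 1 - q ^ (m + 1) / (1 - q) ≤ T := by
    apply ge_of_tendsto htendsto
    filter_upwards with N
    calc 1 - q ^ (m + 1) / (1 - q) ≤ 1 - ∑ j ∈ range N, q ^ (j + m + 1) := by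
          linarith [hSsum N]
      _ ≤ ∏ j ∈ range N, (1 - q ^ (j + m + 1)) :=
          aux_prod_one_sub_ge (fun j => (pow_pos hq0 _).le)
            (fun j => (aux_pow_lt_one hq0 hq1 (j + m)).le) N
  -- now the main estimate
  rw [hratio, abs_of_nonpos (by linarith)]
  have hstep : -(T - 1) ≤ q ^ (m + 1) / (1 - q) := by linarith
  refine hstep.trans ?_
  -- compare exponents
  have hfin : ∀ s : Finset ℕ, (1:ℝ) ≤ ∏ j ∈ s, (1 + q ^ (j + 3)) := by
    intro s
    calc (1:ℝ) = ∏ j ∈ s, 1 := by simp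
      _ ≤ ∏ j ∈ s, (1 + q ^ (j + 3)) :=
        Finset.prod_le_prod (fun i _ => zero_le_one) (fun i _ => by nlinarith [pow_pos hq0 (i + 3)])
  have hCge : (1:ℝ) ≤ ∏' j : ℕ, (1 + q ^ (j + 3)) := by
    by_cases hC : Multipliable fun j : ℕ => (1 + q ^ (j + 3))
    · apply ge_of_tendsto hC.hasProd.tendsto_prod_nat
      filter_upwards with N using hfin _
    · rw [tprod_eq_one_of_not_multipliable hC]
  have hexp : q ^ (m + 1) ≤ q ^ ((n : ℝ) / 2) := by
    rw [← Real.rpow_natCast q (m + 1)]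
    apply Real.rpow_le_rpow_of_exponent_ge hq0 hq1.le
    have hk2 : (k : ℝ) ≤ (n : ℝ) / 2 := by
      have h2 : 2 * k ≤ n := by omega
      have : (2 : ℝ) * k ≤ n := by exact_mod_cast h2
      linarith
    have hkn : k ≤ n := by omega
    have hcast : ((m + 1 : ℕ) : ℝ) = (n : ℝ) - k + 1 := by
      rw [hm]
      push_cast [Nat.cast_sub hkn]
      ring
    rw [hcast]
    linarith
  rw [div_le_div_iff_of_pos_right hq1']
  calc q ^ (m + 1) ≤ q ^ ((n : ℝ) / 2) := hexp
    _ = 1 * q ^ ((n : ℝ) / 2) := (one_mul _).symm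
    _ ≤ (∏' j : ℕ, (1 + q ^ (j + 3))) * q ^ ((n : ℝ) / 2) := by
        apply mul_le_mul_of_nonneg_right hCge (Real.rpow_nonneg hq0.le _)
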